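/- Consider a non-degenerate finite partial monitoring game with k actions and d outcomes, and let u ∈ Δ^{d−1}. Let V = {a ∈ [k] : u ∈ C_a} and let E = {{a,b} ⊆ V : a and b are neighbours}. Then the graph (V, E) is connected. -/

import Mathlib

open scoped BigOperators Classical

noncomputable section

/-- The affine dimension of a subset of `ℝ^d`, with the convention that the empty
set has dimension `-1`. -/
def affDim {d : ℕ} (s : Set (Fin d → ℝ)) : ℤ :=
  if s = ∅ then -1 else (Module.finrank ℝ (affineSpan ℝ s).direction : ℤ)

/-- The cell of action `a`: distributions over outcomes for which `a` has minimal
expected loss. -/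
def cell {k d : ℕ} (L : Fin k → Fin d → ℝ) (a : Fin k) : Set (Fin d → ℝ) :=
  {u | u ∈ stdSimplex ℝ (Fin d) ∧ ∀ b : Fin k, ∑ x, L a x * u x ≤ ∑ x, L b x * u x}

/-- An action is Pareto optimal if its cell has affine dimension `d - 1`. -/
def Pareto {k d : ℕ} (L : Fin k → Fin d → ℝ) (a : Fin k) : Prop :=
  affDim (cell L a) = (d : ℤ) - 1

/-- Two Pareto optimal actions are neighbours if their cells intersect in a set of
affine dimension `d - 2`. -/
def Neighbours {k d : ℕ} (L : Fin k → Fin d → ℝ) (a b : Fin k) : Prop :=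
  Pareto L a ∧ Pareto L b ∧ affDim (cell L a ∩ cell L b) = (d : ℤ) - 2

/-- A game is non-degenerate if there are no duplicate actions and every action is
Pareto optimal. -/
def NondegenerateGame {k d : ℕ} (L : Fin k → Fin d → ℝ) : Prop :=
  (∀ a b : Fin k, a ≠ b → (fun x => L a x) ≠ (fun x => L b x)) ∧ ∀ a : Fin k, Pareto L a

/-- The neighbourhood `N_a` of an action `a`. -/
def nbhd {k d : ℕ} (L : Fin k → Fin d → ℝ) (a : Fin k) : Set (Fin k) :=
  {b | (d : ℤ) - 2 ≤ affDim (cell L a ∩ cell L b)}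

lemma affDim_eq_finrank {d : ℕ} {s : Set (Fin d → ℝ)} (hs : s.Nonempty) :
    affDim s = (Module.finrank ℝ (affineSpan ℝ s).direction : ℤ) := by
  rw [affDim, if_neg hs.ne_empty]

lemma affDim_nonneg {d : ℕ} {s : Set (Fin d → ℝ)} (hs : s.Nonempty) : 0 ≤ affDim s := by
  rw [affDim_eq_finrank hs]; positivity

lemma cell_convex {k d : ℕ} (L : Fin k → Fin d → ℝ) (a : Fin k) : Convex ℝ (cell L a) := by
  intro v hv w hw p q hp hq hpq
  refine ⟨convex_stdSimplex ℝ _ hv.1 hw.1 hp hq hpq, ?_⟩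
  intro b
  have h1 : ∀ c : Fin k, ∑ x, L c x * (p • v + q • w) x
      = p * ∑ x, L c x * v x + q * ∑ x, L c x * w x := by
    intro c
    rw [Finset.mul_sum, Finset.mul_sum, ← Finset.sum_add_distrib]
    refine Finset.sum_congr rfl fun x _ => ?_
    simp [Pi.add_apply, Pi.smul_apply, smul_eq_mul]
    ring
  rw [h1, h1]
  exact add_le_add (mul_le_mul_of_nonneg_left (hv.2 b) hp)
    (mul_le_mul_of_nonneg_left (hw.2 b) hq)

lemma cell_closed {k d : ℕ} (L : Fin k → Fin d → ℝ) (a : Fin k) : IsClosed (cell L a) := by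
  have hrw : cell L a = stdSimplex ℝ (Fin d) ∩
      ⋂ b, {v : Fin d → ℝ | ∑ x, L a x * v x ≤ ∑ x, L b x * v x} := by
    ext v; simp [cell, Set.mem_iInter]
  rw [hrw]
  refine (isClosed_stdSimplex _ _).inter (isClosed_iInter fun b => isClosed_le ?_ ?_) <;>
    exact continuous_finset_sum _ fun x _ => continuous_const.mul (continuous_apply x)

/-- The bundled linear functional `v ↦ ∑ x, c x * v x`. -/
def sumCoeff {d : ℕ} (c : Fin d → ℝ) : (Fin d → ℝ) →ₗ[ℝ] ℝ where
  toFun v := ∑ x, c x * v x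
  map_add' v w := by simp [mul_add, Finset.sum_add_distrib]
  map_smul' r v := by
    simp only [Pi.smul_apply, smul_eq_mul, RingHom.id_apply]
    rw [Finset.mul_sum]
    exact Finset.sum_congr rfl fun x _ => by ring

lemma key_dim {k d : ℕ} (hd : 0 < d) (L : Fin k → Fin d → ℝ) (hnd : NondegenerateGame L)
    {p q : Fin k} (hpq : p ≠ q) {w : Fin d → ℝ} (hwp : w ∈ cell L p) (hwq : w ∈ cell L q) :
    affDim (cell L p ∩ cell L q) ≤ (d : ℤ) - 2 := by
  by_contra hlt
  push_neg at hlt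
  set S := cell L p ∩ cell L q with hS
  have hSne : S.Nonempty := ⟨w, hwp, hwq⟩
  set σ : (Fin d → ℝ) →ₗ[ℝ] ℝ := sumCoeff (fun _ => (1:ℝ)) with hσ
  set W0 := LinearMap.ker σ with hW0def
  have hσsurj : LinearMap.range σ = ⊤ := by
    rw [LinearMap.range_eq_top]
    intro r
    refine ⟨Pi.single ⟨0, hd⟩ r, ?_⟩
    simp [hσ, sumCoeff, Pi.single_apply]
  have hW0 : 1 + Module.finrank ℝ W0 = d := by
    have h := LinearMap.finrank_range_add_finrank_ker σ
    rw [hσsurj] at h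
    simpa [Module.finrank_pi] using h
  have hσval : ∀ v ∈ stdSimplex ℝ (Fin d), σ v = 1 := by
    intro v hv
    simpa [hσ, sumCoeff] using hv.2
  have hSH : S ⊆ ↑(AffineSubspace.mk' w W0) := by
    intro v hv
    rw [AffineSubspace.mem_coe, AffineSubspace.mem_mk']
    rw [hW0def, LinearMap.mem_ker, vsub_eq_sub, map_sub, hσval v hv.1.1, hσval w hwp.1]
    ring
  have hdir : (affineSpan ℝ S).direction ≤ W0 := by
    have h1 : affineSpan ℝ S ≤ AffineSubspace.mk' w W0 := affineSpan_le.mpr hSH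
    simpa [AffineSubspace.direction_mk'] using AffineSubspace.direction_le h1
  set c : Fin d → ℝ := fun x => L p x - L q x with hc
  set φ : (Fin d → ℝ) →ₗ[ℝ] ℝ := sumCoeff c with hφ
  have hφS : ∀ v ∈ S, φ v = 0 := by
    intro v hv
    have h1 := hv.1.2 q
    have h2 := hv.2.2 p
    have heq : ∑ x, L p x * v x = ∑ x, L q x * v x := le_antisymm h1 h2
    simp only [hφ, sumCoeff, hc, LinearMap.coe_mk, AddHom.coe_mk, sub_mul]
    rw [Finset.sum_sub_distrib, heq, sub_self]
  have hker : (affineSpan ℝ S).direction ≤ LinearMap.ker φ := by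
    rw [direction_affineSpan, vectorSpan_def, Submodule.span_le]
    rintro _ ⟨v, hv, v', hv', rfl⟩
    show φ (v -ᵥ v') = 0
    rw [vsub_eq_sub, map_sub, hφS v hv, hφS v' hv',
      sub_self]
  have hfr : Module.finrank ℝ W0 ≤ Module.finrank ℝ (affineSpan ℝ S).direction := by
    have hge : (d : ℤ) - 1 ≤ (Module.finrank ℝ (affineSpan ℝ S).direction : ℤ) := by
      rw [affDim_eq_finrank hSne] at hlt; omega
    have : ((1:ℤ) + Module.finrank ℝ W0) = d := by exact_mod_cast hW0
    omega
  have hW0le : W0 ≤ LinearMap.ker φ := by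
    rw [← Submodule.eq_of_le_of_finrank_le hdir hfr]
    exact hker
  have hconst : ∀ x y : Fin d, c x = c y := by
    intro x y
    by_cases hxy : x = y
    · rw [hxy]
    · have hmem : (Pi.single x (1:ℝ) - Pi.single y 1) ∈ W0 := by
        rw [hW0def, LinearMap.mem_ker, map_sub]
        simp [hσ, sumCoeff, Pi.single_apply]
      have h0 := hW0le hmem
      rw [LinearMap.mem_ker, map_sub] at h0
      have hx1 : φ (Pi.single x 1) = c x := by simp [hφ, sumCoeff, Pi.single_apply]
      have hy1 : φ (Pi.single y 1) = c y := by simp [hφ, sumCoeff, Pi.single_apply]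
      rw [hx1, hy1] at h0
      linarith
  have hcw : ∑ x, c x * w x = 0 := hφS w ⟨hwp, hwq⟩
  have hc0 : c ⟨0, hd⟩ = 0 := by
    have hrw : ∑ x, c x * w x = c ⟨0, hd⟩ * ∑ x, w x := by
      rw [Finset.mul_sum]
      exact Finset.sum_congr rfl fun x _ => by rw [hconst x ⟨0, hd⟩]
    rw [hrw] at hcw
    have hsum : ∑ x, w x = 1 := hwp.1.2
    rw [hsum, mul_one] at hcw
    exact hcw
  exact hnd.1 p q hpq (funext fun x => by
    have h := hconst x ⟨0, hd⟩
    rw [hc0] at h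
    simpa [hc, sub_eq_zero] using h)


/-- A convex set not contained in any of finitely many affine subspaces contains a point
outside all of them. -/
lemma exists_not_mem_affine {d : ℕ} {ι : Type*} (s : Set (Fin d → ℝ)) (hconv : Convex ℝ s)
    (hne : s.Nonempty) (T : Finset ι) (W : ι → AffineSubspace ℝ (Fin d → ℝ))
    (hW : ∀ i ∈ T, ¬ s ⊆ ↑(W i)) : ∃ x ∈ s, ∀ i ∈ T, x ∉ W i := by
  classical
  revert hW
  induction T using Finset.induction_on with
  | empty => exact fun _ => ⟨hne.choose, hne.choose_spec, by simp⟩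
  | @insert i T hi IH =>
    intro hW
    obtain ⟨x, hxs, hx⟩ := IH (fun j hj => hW j (Finset.mem_insert_of_mem hj))
    by_cases hxi : x ∈ W i
    · obtain ⟨y, hys, hyi⟩ := Set.not_subset.mp (hW i (Finset.mem_insert_self i T))
      set z : ℝ → (Fin d → ℝ) := fun t => x + t • (y - x) with hz
      have hzs : ∀ t ∈ Set.Ioc (0:ℝ) 1, z t ∈ s := by
        intro t ht
        have h := hconv hxs hys (by linarith [ht.2] : (0:ℝ) ≤ 1 - t) ht.1.le (by ring)
        convert h using 1
        funext w
        simp [hz, Pi.add_apply, Pi.smul_apply, smul_eq_mul]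
        ring
      have claim1 : ∀ t ∈ Set.Ioc (0:ℝ) 1, z t ∉ W i := by
        intro t ht hzt
        apply hyi
        have hkey : y = t⁻¹ • (z t -ᵥ x) +ᵥ x := by
          have htne : t ≠ 0 := ne_of_gt ht.1
          funext w
          simp [hz, vsub_eq_sub, vadd_eq_add, Pi.add_apply, Pi.sub_apply, Pi.smul_apply,
            smul_eq_mul]
          field_simp
          ring
        rw [hkey]
        exact AffineSubspace.smul_vsub_vadd_mem _ _ hzt hxi hxi
      have claim2 : ∀ j ∈ T, {t : ℝ | z t ∈ W j}.Subsingleton := by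
        intro j hj t ht t' ht'
        by_contra hne'
        apply hx j hj
        have htt : t - t' ≠ 0 := sub_ne_zero.mpr hne'
        have hkey : x = (t/(t - t')) • (z t' -ᵥ z t) +ᵥ z t := by
          funext w
          simp [hz, vsub_eq_sub, vadd_eq_add, Pi.add_apply, Pi.sub_apply, Pi.smul_apply,
            smul_eq_mul]
          field_simp
          ring
        rw [hkey]
        exact AffineSubspace.smul_vsub_vadd_mem _ _ ht' ht ht
      have hbad : (⋃ j ∈ T, {t : ℝ | z t ∈ W j}).Finite :=
        Set.Finite.biUnion T.finite_toSet (fun j hj => (claim2 j hj).finite)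
      have hinf : ((Set.Ioc (0:ℝ) 1) \ ⋃ j ∈ T, {t : ℝ | z t ∈ W j}).Infinite :=
        (Set.Ioc_infinite (by norm_num : (0:ℝ) < 1)).diff hbad
      obtain ⟨t, ht⟩ := hinf.nonempty
      refine ⟨z t, hzs t ht.1, ?_⟩
      intro j hj
      rcases Finset.mem_insert.mp hj with rfl | hj'
      · exact claim1 t ht.1
      · exact fun hzw => ht.2 (Set.mem_biUnion hj' hzw)
    · refine ⟨x, hxs, ?_⟩
      intro j hj
      rcases Finset.mem_insert.mp hj with rfl | hj'
      · exact hxi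
      · exact hx _ hj'


lemma pareto_finrank {k d : ℕ} (hd : 0 < d) {L : Fin k → Fin d → ℝ} {a : Fin k}
    (h : Pareto L a) : (cell L a).Nonempty ∧
      (Module.finrank ℝ (affineSpan ℝ (cell L a)).direction : ℤ) = (d : ℤ) - 1 := by
  rw [Pareto, affDim] at h
  split_ifs at h with he
  · omega
  · exact ⟨Set.nonempty_iff_ne_empty.mpr he, h⟩

lemma finrank_span_singleton_le' {V : Type*} [AddCommGroup V] [Module ℝ V] (v : V) :
    Module.finrank ℝ (Submodule.span ℝ ({v} : Set V)) ≤ 1 := by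
  by_cases hv : v = 0
  · subst hv
    rw [Submodule.span_zero_singleton, finrank_bot]
    norm_num
  · rw [finrank_span_singleton hv]

/-- In a non-degenerate game, for any distribution `u` over outcomes, the graph on the
set of actions optimal at `u` whose edges join neighbouring actions is connected. -/
theorem optimal_actions_graph_connected {k d : ℕ} (hk : 1 ≤ k)
    (L : Fin k → Fin d → ℝ) (hnd : NondegenerateGame L)
    (u : Fin d → ℝ) (hu : u ∈ stdSimplex ℝ (Fin d))
    (Gr : SimpleGraph {a : Fin k // u ∈ cell L a})
    (hGr : ∀ a b, Gr.Adj a b ↔ Neighbours L a.1 b.1) :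
    Gr.Connected := by
  classical
  -- d is positive
  have hd : 0 < d := by
    rcases Nat.eq_zero_or_pos d with h0 | h
    · exfalso
      have h1 : ∑ x : Fin d, u x = 1 := hu.2
      subst h0
      simp at h1
    · exact h
  -- every point of the simplex lies in some cell
  have hcover : ∀ v ∈ stdSimplex ℝ (Fin d), ∃ c, v ∈ cell L c := by
    intro v hv
    obtain ⟨c, -, hc⟩ := Finset.exists_min_image Finset.univ
      (fun c => ∑ x, L c x * v x) ⟨⟨0, hk⟩, Finset.mem_univ _⟩
    exact ⟨c, hv, fun b => hc b (Finset.mem_univ b)⟩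
  rw [SimpleGraph.connected_iff]
  have hune : ∃ c, u ∈ cell L c := hcover u hu
  refine ⟨?_, ⟨⟨hune.choose, hune.choose_spec⟩⟩⟩
  intro a0 b0
  by_contra hnr
  -- the two sides of the partition
  set A : Set (Fin k) := {p | ∃ h : u ∈ cell L p, Gr.Reachable a0 ⟨p, h⟩} with hA
  set B : Set (Fin k) := {q | u ∈ cell L q ∧ q ∉ A} with hB
  have ha0A : a0.1 ∈ A := ⟨a0.2, by exact SimpleGraph.Reachable.refl _⟩
  have hb0B : b0.1 ∈ B := by
    refine ⟨b0.2, fun hmem => ?_⟩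
    obtain ⟨h, hr⟩ := hmem
    exact hnr hr
  -- cross pairs
  set Tcross : Finset (Fin k × Fin k) :=
    Finset.univ.filter (fun pq => pq.1 ∈ A ∧ pq.2 ∈ B) with hT
  have hTmem : ∀ pq : Fin k × Fin k, pq ∈ Tcross ↔ (pq.1 ∈ A ∧ pq.2 ∈ B) := by
    intro pq; simp [hT]
  set Wf : Fin k × Fin k → AffineSubspace ℝ (Fin d → ℝ) :=
    fun pq => affineSpan ℝ (cell L pq.1 ∩ cell L pq.2) with hWf
  -- basic facts about cross pairs
  have hcell_of_A : ∀ p ∈ A, u ∈ cell L p := fun p hp => hp.choose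
  have hcell_of_B : ∀ q ∈ B, u ∈ cell L q := fun q hq => hq.1
  have hcrossne : ∀ pq ∈ Tcross, pq.1 ≠ pq.2 := by
    intro pq hpq
    obtain ⟨hp, hq⟩ := (hTmem pq).mp hpq
    intro he
    exact hq.2 (he ▸ hp)
  have hcross_u : ∀ pq ∈ Tcross, u ∈ cell L pq.1 ∩ cell L pq.2 := by
    intro pq hpq
    obtain ⟨hp, hq⟩ := (hTmem pq).mp hpq
    exact ⟨hcell_of_A _ hp, hq.1⟩
  have hcross_nb : ∀ pq ∈ Tcross, ¬ Neighbours L pq.1 pq.2 := by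
    intro pq hpq hN
    obtain ⟨hp, hq⟩ := (hTmem pq).mp hpq
    obtain ⟨hup, hr⟩ := hp
    refine hq.2 ⟨hq.1, hr.trans (SimpleGraph.Adj.reachable ?_)⟩
    exact (hGr ⟨pq.1, hup⟩ ⟨pq.2, hq.1⟩).mpr hN
  -- dimension of cross intersections
  have hcross_dim : ∀ pq ∈ Tcross,
      (Module.finrank ℝ (Wf pq).direction : ℤ) ≤ (d : ℤ) - 3 := by
    intro pq hpq
    have hu2 := hcross_u pq hpq
    have hne : (cell L pq.1 ∩ cell L pq.2).Nonempty := ⟨u, hu2⟩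
    have hfr : affDim (cell L pq.1 ∩ cell L pq.2)
        = (Module.finrank ℝ (Wf pq).direction : ℤ) := affDim_eq_finrank hne
    have hle : affDim (cell L pq.1 ∩ cell L pq.2) ≤ (d : ℤ) - 2 :=
      key_dim hd L hnd (hcrossne pq hpq) hu2.1 hu2.2
    have hne2 : affDim (cell L pq.1 ∩ cell L pq.2) ≠ (d : ℤ) - 2 := by
      intro he
      exact hcross_nb pq hpq ⟨hnd.2 _, hnd.2 _, he⟩
    omega
  -- a cell is never inside a small affine subspace
  have not_sub : ∀ (a : Fin k) (W : AffineSubspace ℝ (Fin d → ℝ)),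
      (Module.finrank ℝ W.direction : ℤ) ≤ (d : ℤ) - 2 → ¬ (cell L a ⊆ ↑W) := by
    intro a W hW hsub
    obtain ⟨hne, hfr⟩ := pareto_finrank hd (hnd.2 a)
    have h1 : affineSpan ℝ (cell L a) ≤ W := affineSpan_le.mpr hsub
    have h2 : Module.finrank ℝ (affineSpan ℝ (cell L a)).direction
        ≤ Module.finrank ℝ W.direction :=
      Submodule.finrank_mono (AffineSubspace.direction_le h1)
    have h3 : ((Module.finrank ℝ (affineSpan ℝ (cell L a)).direction : ℤ))
        ≤ (Module.finrank ℝ W.direction : ℤ) := by exact_mod_cast h2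
    omega
  -- localization radius
  set K : Set (Fin d → ℝ) :=
    ⋃ c ∈ (Finset.univ.filter (fun c => u ∉ cell L c)), cell L c with hK
  have hKclosed : IsClosed K := by
    apply Set.Finite.isClosed_biUnion (Finset.finite_toSet _)
    intro c _
    exact cell_closed L c
  have huK : u ∉ K := by
    intro hmem
    rw [hK, Set.mem_iUnion] at hmem
    obtain ⟨c, hc⟩ := hmem
    rw [Set.mem_iUnion] at hc
    obtain ⟨hcf, hcc⟩ := hc
    exact (Finset.mem_filter.mp hcf).2 hcc
  obtain ⟨ε, hε, hball⟩ := Metric.isOpen_iff.mp hKclosed.isOpen_compl u huK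
  have hball' : ∀ v ∈ Metric.ball u ε, ∀ c : Fin k, v ∈ cell L c → u ∈ cell L c := by
    intro v hv c hc
    by_contra hnc
    exact (hball hv) (Set.mem_biUnion (Finset.mem_filter.mpr ⟨Finset.mem_univ _, hnc⟩) hc)
  -- choose a private point for b0 avoiding all cross spans
  have hconvb : Convex ℝ (cell L b0.1) := cell_convex L b0.1
  have hnotsubW : ∀ pq ∈ Tcross, ¬ (cell L b0.1 ⊆ ↑(Wf pq)) := by
    intro pq hpq
    refine not_sub _ _ ?_
    have := hcross_dim pq hpq
    omega
  obtain ⟨xb, hxbs, hxb⟩ := exists_not_mem_affine _ hconvb ⟨u, b0.2⟩ Tcross Wf hnotsubW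
  set δ₁ : ℝ := min 1 (ε / (2 * (‖xb - u‖ + 1))) with hδ₁def
  have hδ₁pos : 0 < δ₁ := lt_min one_pos (by positivity)
  have hδ₁ne : δ₁ ≠ 0 := hδ₁pos.ne'
  have hδ₁le : δ₁ ≤ 1 := min_le_left _ _
  set y : Fin d → ℝ := (1 - δ₁) • u + δ₁ • xb with hy
  have hy_cell : y ∈ cell L b0.1 := hconvb b0.2 hxbs (by linarith) hδ₁pos.le (by ring)
  have hyu : y - u = δ₁ • (xb - u) := by
    funext w
    simp [hy, Pi.add_apply, Pi.sub_apply, Pi.smul_apply, smul_eq_mul]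
    ring
  have shrink_ball : ∀ w : Fin d → ℝ, ∀ δ : ℝ, 0 < δ → δ ≤ ε / (2 * (‖w - u‖ + 1)) →
      ∀ z : Fin d → ℝ, z - u = δ • (w - u) → z ∈ Metric.ball u ε := by
    intro w δ hδ hδle z hz
    rw [Metric.mem_ball, dist_eq_norm, hz, norm_smul, Real.norm_eq_abs, abs_of_pos hδ]
    have hN : (0:ℝ) ≤ ‖w - u‖ := norm_nonneg _
    have h2 : δ * ‖w - u‖ ≤ (ε / (2 * (‖w - u‖ + 1))) * ‖w - u‖ :=
      mul_le_mul_of_nonneg_right hδle hN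
    have h3 : (ε / (2 * (‖w - u‖ + 1))) * ‖w - u‖ < ε := by
      rw [div_mul_eq_mul_div, div_lt_iff₀ (by positivity)]
      nlinarith
    linarith
  have hy_ball : y ∈ Metric.ball u ε :=
    shrink_ball xb δ₁ hδ₁pos (min_le_right _ _) y hyu
  have hy_not : ∀ pq ∈ Tcross, y ∉ Wf pq := by
    intro pq hpq hyW
    apply hxb pq hpq
    have huW : u ∈ Wf pq := subset_affineSpan ℝ _ (hcross_u pq hpq)
    have hxbeq : xb = δ₁⁻¹ • (y -ᵥ u) +ᵥ u := by
      funext w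
      simp [hy, vsub_eq_sub, vadd_eq_add, Pi.add_apply, Pi.sub_apply, Pi.smul_apply,
        smul_eq_mul]
      field_simp
      ring
    rw [hxbeq]
    exact AffineSubspace.smul_vsub_vadd_mem _ _ hyW huW huW
  -- the enlarged subspaces through y
  set Jf : Fin k × Fin k → AffineSubspace ℝ (Fin d → ℝ) :=
    fun pq => affineSpan ℝ (insert y ↑(Wf pq)) with hJf
  have huW' : ∀ pq ∈ Tcross, u ∈ Wf pq := fun pq hpq =>
    subset_affineSpan ℝ _ (hcross_u pq hpq)
  have hJdim : ∀ pq ∈ Tcross, (Module.finrank ℝ (Jf pq).direction : ℤ) ≤ (d : ℤ) - 2 := by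
    intro pq hpq
    have hdir : (Jf pq).direction = Submodule.span ℝ {y -ᵥ u} ⊔ (Wf pq).direction :=
      AffineSubspace.direction_affineSpan_insert (huW' pq hpq)
    rw [hdir]
    have h1 := Submodule.finrank_add_le_finrank_add_finrank
      (Submodule.span ℝ ({y -ᵥ u} : Set (Fin d → ℝ))) (Wf pq).direction
    have h2 := finrank_span_singleton_le' (y -ᵥ u)
    have h3 := hcross_dim pq hpq
    have h1' : (Module.finrank ℝ
        (Submodule.span ℝ ({y -ᵥ u} : Set (Fin d → ℝ)) ⊔ (Wf pq).direction :
          Submodule ℝ (Fin d → ℝ)) : ℤ)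
        ≤ (Module.finrank ℝ (Submodule.span ℝ ({y -ᵥ u} : Set (Fin d → ℝ))) : ℤ)
          + (Module.finrank ℝ (Wf pq).direction : ℤ) := by exact_mod_cast h1
    have h2' : (Module.finrank ℝ (Submodule.span ℝ ({y -ᵥ u} : Set (Fin d → ℝ))) : ℤ) ≤ 1 := by
      exact_mod_cast h2
    omega
  have huJ : ∀ pq ∈ Tcross, u ∈ Jf pq := fun pq hpq =>
    subset_affineSpan ℝ _ (Set.mem_insert_of_mem _ (huW' pq hpq))
  -- choose a private point for a0 avoiding the enlarged subspaces
  obtain ⟨m0, hm0s, hm0⟩ := exists_not_mem_affine _ (cell_convex L a0.1) ⟨u, a0.2⟩ Tcross Jf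
    (fun pq hpq => not_sub _ _ (hJdim pq hpq))
  set δ₂ : ℝ := min 1 (ε / (2 * (‖m0 - u‖ + 1))) with hδ₂def
  have hδ₂pos : 0 < δ₂ := lt_min one_pos (by positivity)
  have hδ₂ne : δ₂ ≠ 0 := hδ₂pos.ne'
  have hδ₂le : δ₂ ≤ 1 := min_le_left _ _
  set m : Fin d → ℝ := (1 - δ₂) • u + δ₂ • m0 with hm
  have hm_cell : m ∈ cell L a0.1 :=
    cell_convex L a0.1 a0.2 hm0s (by linarith) hδ₂pos.le (by ring)
  have hmu : m - u = δ₂ • (m0 - u) := by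
    funext w
    simp [hm, Pi.add_apply, Pi.sub_apply, Pi.smul_apply, smul_eq_mul]
    ring
  have hm_ball : m ∈ Metric.ball u ε :=
    shrink_ball m0 δ₂ hδ₂pos (min_le_right _ _) m hmu
  have hm_not : ∀ pq ∈ Tcross, m ∉ Jf pq := by
    intro pq hpq hmW
    apply hm0 pq hpq
    have hmeq : m0 = δ₂⁻¹ • (m -ᵥ u) +ᵥ u := by
      funext w
      simp [hm, vsub_eq_sub, vadd_eq_add, Pi.add_apply, Pi.sub_apply, Pi.smul_apply,
        smul_eq_mul]
      field_simp
      ring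
    rw [hmeq]
    exact AffineSubspace.smul_vsub_vadd_mem _ _ hmW (huJ pq hpq) (huJ pq hpq)
  -- the connecting segment
  set g : ℝ → (Fin d → ℝ) := fun t => (1 - t) • m + t • y with hg
  have hg_cont : Continuous g := by
    apply Continuous.add
    · exact (continuous_const.sub continuous_id).smul continuous_const
    · exact continuous_id.smul continuous_const
  have hg0 : g 0 = m := by simp [hg]
  have hg1 : g 1 = y := by simp [hg]
  have hg_mem : ∀ t ∈ Set.Icc (0:ℝ) 1, g t ∈ stdSimplex ℝ (Fin d) ∧ g t ∈ Metric.ball u ε := by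
    intro t ht
    constructor
    · exact convex_stdSimplex ℝ _ hm_cell.1 hy_cell.1 (by linarith [ht.2]) ht.1 (by ring)
    · exact convex_ball u ε hm_ball hy_ball (by linarith [ht.2]) ht.1 (by ring)
  have hg_avoid : ∀ t ∈ Set.Icc (0:ℝ) 1, ∀ pq ∈ Tcross, g t ∉ Wf pq := by
    intro t ht pq hpq hgW
    by_cases ht1 : t = 1
    · rw [ht1, hg1] at hgW
      exact hy_not pq hpq hgW
    · have h1t : (1:ℝ) - t ≠ 0 := sub_ne_zero.mpr (Ne.symm ht1)
      apply hm_not pq hpq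
      have hyJ : y ∈ Jf pq := subset_affineSpan ℝ _ (Set.mem_insert _ _)
      have hgJ : g t ∈ Jf pq := subset_affineSpan ℝ _ (Set.mem_insert_of_mem _ hgW)
      have hmeq : m = (1 - t)⁻¹ • (g t -ᵥ y) +ᵥ y := by
        funext w
        simp [hg, vsub_eq_sub, vadd_eq_add, Pi.add_apply, Pi.sub_apply, Pi.smul_apply,
          smul_eq_mul]
        field_simp
        ring
      rw [hmeq]
      exact AffineSubspace.smul_vsub_vadd_mem _ _ hgJ hyJ hyJ
  -- the two closed sets
  set UA : Set (Fin d → ℝ) := ⋃ p ∈ Finset.univ.filter (fun p : Fin k => p ∈ A), cell L p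
    with hUA
  set UB : Set (Fin d → ℝ) := ⋃ q ∈ Finset.univ.filter (fun q : Fin k => q ∈ B), cell L q
    with hUB
  have hUAc : IsClosed UA :=
    Set.Finite.isClosed_biUnion (Finset.finite_toSet _) (fun c _ => cell_closed L c)
  have hUBc : IsClosed UB :=
    Set.Finite.isClosed_biUnion (Finset.finite_toSet _) (fun c _ => cell_closed L c)
  have hcov : Set.Icc (0:ℝ) 1 ⊆ g ⁻¹' UA ∪ g ⁻¹' UB := by
    intro t ht
    obtain ⟨hsimp, hball2⟩ := hg_mem t ht
    obtain ⟨c, hc⟩ := hcover _ hsimp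
    have huc : u ∈ cell L c := hball' _ hball2 c hc
    by_cases hcA : c ∈ A
    · left
      rw [Set.mem_preimage, hUA]
      simp only [Set.mem_iUnion]
      exact ⟨c, by simp [hcA], hc⟩
    · right
      have hcB : c ∈ B := ⟨huc, hcA⟩
      rw [Set.mem_preimage, hUB]
      simp only [Set.mem_iUnion]
      exact ⟨c, by simp [hcB], hc⟩
  have h0mem : (Set.Icc (0:ℝ) 1 ∩ g ⁻¹' UA).Nonempty := by
    refine ⟨0, ⟨by norm_num, le_of_lt one_pos⟩, ?_⟩
    rw [Set.mem_preimage, hg0, hUA]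
    simp only [Set.mem_iUnion]
    exact ⟨a0.1, by simp [ha0A], hm_cell⟩
  have h1mem : (Set.Icc (0:ℝ) 1 ∩ g ⁻¹' UB).Nonempty := by
    refine ⟨1, ⟨le_of_lt one_pos, le_refl 1⟩, ?_⟩
    rw [Set.mem_preimage, hg1, hUB]
    simp only [Set.mem_iUnion]
    exact ⟨b0.1, by simp [hb0B], hy_cell⟩
  obtain ⟨t, htIcc, htA, htB⟩ := (isPreconnected_closed_iff.mp isPreconnected_Icc)
    (g ⁻¹' UA) (g ⁻¹' UB) (hUAc.preimage hg_cont) (hUBc.preimage hg_cont) hcov h0mem h1mem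
  rw [Set.mem_preimage] at htA htB
  rw [hUA] at htA
  rw [hUB] at htB
  simp only [Set.mem_iUnion, Finset.mem_filter, Finset.mem_univ, true_and,
    exists_prop] at htA htB
  obtain ⟨p, hpA, hpc⟩ := htA
  obtain ⟨q, hqB, hqc⟩ := htB
  have hpqT : (p, q) ∈ Tcross := (hTmem _).mpr ⟨hpA, hqB⟩
  exact hg_avoid t htIcc (p, q) hpqT (subset_affineSpan ℝ _ (⟨hpc, hqc⟩ : g t ∈ cell L p ∩ cell L q))

end
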